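/- Let Σ be an alphabet, l ≥ 1, k ≥ 1, u_1,…,u_k ∈ Σ^+, and let L = ⟨u_1,…,u_k⟩_l. Let ω' ≥ Σ_{i=1}^k l·|u_i| be any natural number. Then for all words u, v, x, y ∈ Σ* with uv nonempty: x (uv)^{ω'} y ∈ L if and only if x (uv)^{ω'} u (uv)^{ω'} y ∈ L. -/

import Mathlib

/-- `u^l`: the concatenation of `l` copies of the word `u`. -/
def wpow {α : Type*} (u : List α) (l : ℕ) : List α := (List.replicate l u).flatten

/-- Concatenation of two languages. -/
def lconc {α : Type*} (L K : Set (List α)) : Set (List α) :=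
  {w | ∃ x ∈ L, ∃ y ∈ K, w = x ++ y}

/-- `⟨u⟩_l`: words containing `u` as a factor or `u^l` as a subword. -/
def cc {α : Type*} (u : List α) (l : ℕ) : Set (List α) :=
  {w | u <:+: w ∨ (wpow u l).Sublist w}

/-- `⟨u₁,…,u_k⟩_l`: the concatenation of the languages `⟨uᵢ⟩_l`. -/
def chainConc {α : Type*} (Ls : List (Set (List α))) : Set (List α) :=
  Ls.foldr lconc {[]}

namespace Aux

variable {α : Type*}

theorem wpow_succ (w : List α) (n : ℕ) : wpow w (n+1) = w ++ wpow w n := by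
  simp [wpow, List.replicate_succ]

theorem wpow_add (w : List α) (m n : ℕ) : wpow w (m+n) = wpow w m ++ wpow w n := by
  induction m with
  | zero => simp [wpow]
  | succ m ih => rw [Nat.succ_add, wpow_succ, wpow_succ, ih, List.append_assoc]

theorem length_wpow (w : List α) (n : ℕ) : (wpow w n).length = n * w.length := by
  induction n with
  | zero => simp [wpow]
  | succ n ih => rw [wpow_succ]; simp [ih, Nat.succ_mul, Nat.add_comm]

theorem mem_wpow {w : List α} {n : ℕ} {c : α} (h : c ∈ wpow w n) : c ∈ w := by
  induction n with
  | zero => simp [wpow] at h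
  | succ n ih => rw [wpow_succ, List.mem_append] at h; exact h.elim id ih

theorem sublist_wpow {t w : List α} {n : ℕ} (h : ∀ c ∈ t, c ∈ w)
    (hlen : t.length ≤ n) : t.Sublist (wpow w n) := by
  induction n generalizing t with
  | zero => simp_all [List.length_eq_zero_iff.1 (Nat.le_zero.1 hlen), wpow]
  | succ n ih =>
    cases t with
    | nil => exact List.nil_sublist _
    | cons c t =>
      rw [wpow_succ]
      have hc : c ∈ w := h c (List.mem_cons_self)
      obtain ⟨w₁, w₂, rfl⟩ := List.append_of_mem hc
      have ht : t.Sublist (wpow (w₁ ++ c :: w₂) n) :=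
        ih (fun x hx => h x (List.mem_cons_of_mem _ hx)) (Nat.le_of_succ_le_succ hlen)
      have h1 : (c :: t).Sublist (c :: w₂ ++ wpow (w₁ ++ c :: w₂) n) := by
        simpa using (ht.trans (List.sublist_append_right _ _)).cons₂ c
      have h2 : (c :: w₂ ++ wpow (w₁ ++ c :: w₂) n).Sublist
          ((w₁ ++ c :: w₂) ++ wpow (w₁ ++ c :: w₂) n) := by
        simpa [List.append_assoc] using
          (List.sublist_append_right (w₁ : List α) ((c :: w₂ : List α) ++ wpow (w₁ ++ c :: w₂) n))
      exact h1.trans h2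

theorem cc_append_right {d p : List α} {l : ℕ} (h : p ∈ cc d l) (t : List α) :
    p ++ t ∈ cc d l := by
  rcases h with h | h
  · obtain ⟨s, t', rfl⟩ := h
    exact Or.inl ⟨s, t' ++ t, by simp⟩
  · exact Or.inr (h.trans (List.sublist_append_left _ _))

theorem cc_append_left {d p : List α} {l : ℕ} (h : p ∈ cc d l) (t : List α) :
    t ++ p ∈ cc d l := by
  rcases h with h | h
  · obtain ⟨s, t', rfl⟩ := h
    exact Or.inl ⟨t ++ s, t', by simp⟩
  · exact Or.inr (h.trans (List.sublist_append_right _ _))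

end Aux

namespace Aux

variable {α : Type*}

def lang (l : ℕ) (ds : List (List α)) : Set (List α) :=
  chainConc (ds.map fun d => cc d l)

theorem mem_lang_nil {l : ℕ} {x : List α} : x ∈ lang l ([] : List (List α)) ↔ x = [] := by
  simp [lang, chainConc]

theorem mem_lang_cons {l : ℕ} {d : List α} {ds : List (List α)} {x : List α} :
    x ∈ lang l (d :: ds) ↔ ∃ a ∈ cc d l, ∃ b ∈ lang l ds, x = a ++ b := Iff.rfl

theorem lang_left_ext {l : ℕ} {d : List α} {ds : List (List α)} {x : List α}
    (h : x ∈ lang l (d :: ds)) (p : List α) : p ++ x ∈ lang l (d :: ds) := by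
  obtain ⟨a, ha, b, hb, rfl⟩ := mem_lang_cons.1 h
  exact mem_lang_cons.2 ⟨p ++ a, cc_append_left ha p, b, hb, by simp⟩

end Aux

namespace Aux

variable {α : Type*}

theorem cc_sub_of_letters {w d : List α} {l m : ℕ} (hdw : ∀ c ∈ d, c ∈ w)
    (hjm : l * d.length ≤ m) : (wpow d l).Sublist (wpow w m) :=
  sublist_wpow (fun c hc => hdw c (mem_wpow hc)) (by rw [length_wpow]; exact hjm)

theorem D1 {w : List α} {l : ℕ} (hl : 1 ≤ l) (hw : 0 < w.length) :
    ∀ (ds : List (List α)) (m : ℕ),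
      ((ds.map fun d => l * d.length).sum ≤ m) →
      ∀ s y : List α, (∀ c ∈ s, c ∈ w) →
        s ++ (wpow w m ++ y) ∈ lang l ds → wpow w m ++ y ∈ lang l ds := by
  intro ds
  induction ds with
  | nil =>
    intro m _ s y _ h
    rw [mem_lang_nil] at h ⊢
    simp only [List.append_eq_nil_iff] at h
    simp [h.2.1, h.2.2]
  | cons d tl ih =>
    intro m hm s y hs hmem
    simp only [List.map_cons, List.sum_cons] at hm
    set j := l * d.length with hjdef
    have hjm : j ≤ m := le_trans (Nat.le_add_right _ _) hm
    obtain ⟨a, ha, b, hb, heq⟩ := mem_lang_cons.1 hmem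
    have heq' : a ++ b = (s ++ wpow w m) ++ y := by rw [← heq]; simp [List.append_assoc]
    have hsE : ∀ c ∈ s ++ wpow w m, c ∈ w := by
      intro c hc
      rcases List.mem_append.1 hc with hc | hc
      · exact hs _ hc
      · exact mem_wpow hc
    rcases List.append_eq_append_iff.1 heq' with ⟨t₂, hc1, hc2⟩ | ⟨y₁, hc1, hc2⟩
    · -- a is a prefix of s ++ wpow w m; hc1 : s ++ wpow w m = a ++ t₂, hc2 : b = t₂ ++ y
      set M := m - j with hMdef
      have hEsplit : wpow w m = wpow w j ++ wpow w M := by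
        rw [← wpow_add]; congr 1; omega
      -- all letters of wpow d l are in w
      have hda : ∀ c ∈ wpow d l, c ∈ a := by
        rcases ha with hinf | hsub
        · exact fun c hc => hinf.sublist.subset (mem_wpow hc)
        · exact fun c hc => hsub.subset hc
      have hdl : ∀ c ∈ wpow d l, c ∈ w := by
        intro c hc
        refine hsE c ?_
        rw [hc1]
        exact List.mem_append.2 (Or.inl (hda c hc))
      have ha' : wpow w j ∈ cc d l :=
        Or.inr (sublist_wpow hdl (by rw [length_wpow]))
      have ht₂ : t₂ <:+ s ++ wpow w m := ⟨a, hc1.symm⟩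
      have hEM : wpow w M <:+ s ++ wpow w m := by
        refine ⟨s ++ wpow w j, ?_⟩
        rw [hEsplit]; simp [List.append_assoc]
      have hMtl : ((tl.map fun d => l * d.length).sum) ≤ M := by omega
      rcases le_or_gt (M * w.length) t₂.length with hlen2 | hlen2
      · have h1 : wpow w M <:+ t₂ :=
          List.suffix_of_suffix_length_le hEM ht₂ (by rw [length_wpow]; exact hlen2)
        obtain ⟨s'', hs''⟩ := h1
        have hs''w : ∀ c ∈ s'', c ∈ w := by
          intro c hc
          exact hsE c (ht₂.sublist.subset (by rw [← hs'']; exact List.mem_append.2 (Or.inl hc)))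
        have hb' : wpow w M ++ y ∈ lang l tl := by
          refine ih M hMtl s'' y hs''w ?_
          rw [← List.append_assoc, hs'', ← hc2]
          exact hb
        exact mem_lang_cons.2 ⟨wpow w j, ha', wpow w M ++ y, hb', by
          rw [hEsplit]; simp [List.append_assoc]⟩
      · have h1 : t₂ <:+ wpow w M :=
          List.suffix_of_suffix_length_le ht₂ hEM (by rw [length_wpow]; omega)
        obtain ⟨s₃, hs₃⟩ := h1
        cases tl with
        | nil =>
          have hbnil := mem_lang_nil.1 hb
          rw [hc2] at hbnil
          simp only [List.append_eq_nil_iff] at hbnil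
          refine mem_lang_cons.2 ⟨wpow w m ++ y, ?_, [], mem_lang_nil.2 rfl, by simp⟩
          rw [hEsplit, List.append_assoc]
          exact cc_append_right ha' _
        | cons d₂ tl₂ =>
          have hb' : wpow w M ++ y ∈ lang l (d₂ :: tl₂) := by
            have : wpow w M ++ y = s₃ ++ b := by rw [hc2, ← hs₃, List.append_assoc]
            rw [this]
            exact lang_left_ext hb s₃
          exact mem_lang_cons.2 ⟨wpow w j, ha', wpow w M ++ y, hb', by
            rw [hEsplit]; simp [List.append_assoc]⟩
    · -- a = (s ++ wpow w m) ++ y₁, hc2 : y = y₁ ++ b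
      have ha' : wpow w m ++ y₁ ∈ cc d l := by
        rcases ha with hinf | hsub
        · obtain ⟨s₁, s₂, hocc⟩ := hinf
          have hoc2 : s₁ ++ (d ++ s₂) = s ++ (wpow w m ++ y₁) := by
            rw [← List.append_assoc, hocc, hc1, List.append_assoc]
          rcases List.append_eq_append_iff.1 hoc2 with ⟨g, hg1, hg2⟩ | ⟨g, hg1, hg2⟩
          · -- hg1 : s = s₁ ++ g, hg2 : d ++ s₂ = g ++ (wpow w m ++ y₁)
            have hgw : ∀ c ∈ g, c ∈ w := fun c hc => hs c (by rw [hg1]; exact List.mem_append.2 (Or.inr hc))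
            rcases List.append_eq_append_iff.1 hg2 with ⟨q, hq1, hq2⟩ | ⟨q, hq1, hq2⟩
            · -- hq1 : g = d ++ q : d is a prefix of g, letters in w
              have hdw : ∀ c ∈ d, c ∈ w := fun c hc => hgw c (by rw [hq1]; exact List.mem_append.2 (Or.inl hc))
              exact Or.inr ((cc_sub_of_letters hdw hjm).trans (List.sublist_append_left _ _))
            · -- hq1 : d = g ++ q, hq2 : wpow w m ++ y₁ = q ++ s₂
              rcases le_or_gt q.length (wpow w m).length with hql | hql
              · have hqE : q <+: wpow w m :=
                  List.prefix_of_prefix_length_le ⟨s₂, hq2.symm⟩ (List.prefix_append _ _) hql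
                have hdw : ∀ c ∈ d, c ∈ w := by
                  intro c hc
                  rw [hq1] at hc
                  rcases List.mem_append.1 hc with hc | hc
                  · exact hgw c hc
                  · exact mem_wpow (hqE.sublist.subset hc)
                exact Or.inr ((cc_sub_of_letters hdw hjm).trans (List.sublist_append_left _ _))
              · exfalso
                rw [length_wpow] at hql
                have h1 : q.length ≤ d.length := by rw [hq1]; simp
                have h2 : d.length ≤ l * d.length := Nat.le_mul_of_pos_left _ hl
                have h3 : m ≤ m * w.length := Nat.le_mul_of_pos_right _ hw
                omega
          · -- hg1 : s₁ = s ++ g, hg2 : wpow w m ++ y₁ = g ++ (d ++ s₂)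
            exact Or.inl ⟨g, s₂, by simpa [List.append_assoc] using hg2.symm⟩
        · -- sublist case
          rw [hc1] at hsub
          obtain ⟨p1, γ, hdecomp, hp1, hγ⟩ := List.sublist_append_iff.1 hsub
          obtain ⟨p2, β, hd2, hα, hβ⟩ := List.sublist_append_iff.1 hp1
          have hαβw : ∀ c ∈ p2 ++ β, c ∈ w := by
            intro c hc
            rcases List.mem_append.1 hc with hc | hc
            · exact hs c (hα.subset hc)
            · exact mem_wpow (hβ.subset hc)
          have hlen3 : (p2 ++ β).length ≤ m := by
            have := hsub.length_le
            have h4 : (wpow d l).length = l * d.length := length_wpow d l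
            have h5 : (wpow d l).length = p1.length + γ.length := by rw [hdecomp]; simp
            have h6 : p1.length = p2.length + β.length := by rw [hd2]; simp
            simp only [List.length_append]
            omega
          have hmid : (p2 ++ β).Sublist (wpow w m) := sublist_wpow hαβw hlen3
          refine Or.inr ?_
          rw [hdecomp, hd2]
          exact (List.Sublist.append hmid hγ : ((p2 ++ β) ++ γ).Sublist (wpow w m ++ y₁))
      refine mem_lang_cons.2 ⟨wpow w m ++ y₁, ha', b, hb, by rw [hc2]; simp [List.append_assoc]⟩

end Aux

namespace Aux

variable {α : Type*}

theorem mainD {u v : List α} {l ω : ℕ} (hl : 1 ≤ l) (hw : 0 < (u ++ v).length) :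
    ∀ (ds : List (List α)), ((ds.map fun d => l * d.length).sum ≤ ω) →
    ∀ x' y : List α,
      x' ++ (((wpow (u ++ v) ω ++ u) ++ wpow (u ++ v) ω) ++ y) ∈ lang l ds →
      x' ++ (wpow (u ++ v) ω ++ y) ∈ lang l ds := by
  set W := u ++ v with hWdef
  set E := wpow W ω with hEdef
  have hPw : ∀ c ∈ (E ++ u) ++ E, c ∈ W := by
    intro c hc
    rcases List.mem_append.1 hc with hc | hc
    · rcases List.mem_append.1 hc with hc | hc
      · exact mem_wpow hc
      · exact List.mem_append.2 (Or.inl hc)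
    · exact mem_wpow hc
  have hωE : ω ≤ E.length := by
    rw [hEdef, length_wpow]
    exact Nat.le_mul_of_pos_right _ hw
  intro ds
  induction ds with
  | nil =>
    intro _ x' y h
    rw [mem_lang_nil] at h ⊢
    simp only [List.append_eq_nil_iff] at h
    obtain ⟨h1, ⟨⟨h2, _⟩, _⟩, h4⟩ := h
    simp [h1, h2, h4]
  | cons d tl ih =>
    intro hm x' y hmem
    simp only [List.map_cons, List.sum_cons] at hm
    set j := l * d.length with hjdef
    have hjm : j ≤ ω := le_trans (Nat.le_add_right _ _) hm
    set M := ω - j with hMdef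
    have hEsplit : E = wpow W j ++ wpow W M := by
      rw [hEdef, ← wpow_add]; congr 1; omega
    have hdlen : d.length ≤ j := Nat.le_mul_of_pos_left _ hl
    obtain ⟨a, ha, b, hb, heq⟩ := mem_lang_cons.1 hmem
    have heq' : a ++ b = x' ++ (((E ++ u) ++ E) ++ y) := heq.symm
    rcases List.append_eq_append_iff.1 heq' with ⟨x₂, hx1, hx2⟩ | ⟨t, ht1, ht2⟩
    · -- hx1 : x' = a ++ x₂, hx2 : b = x₂ ++ (P ++ y)
      have hb' : x₂ ++ (E ++ y) ∈ lang l tl :=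
        ih (le_trans (Nat.le_add_left _ _) hm) x₂ y (by rw [← hx2]; exact hb)
      exact mem_lang_cons.2 ⟨a, ha, _, hb', by rw [hx1]; simp [List.append_assoc]⟩
    · -- ht1 : a = x' ++ t, ht2 : ((E ++ u) ++ E) ++ y = t ++ b
      have ht2' : ((E ++ u) ++ E) ++ y = t ++ b := ht2
      rcases List.append_eq_append_iff.1 ht2' with ⟨y₁, hy1, hy2⟩ | ⟨t₂, hp1, hp2⟩
      · -- hy1 : t = ((E ++ u) ++ E) ++ y₁, hy2 : y = y₁ ++ b
        -- a = x' ++ P ++ y₁ ; new first chunk is x' ++ (E ++ y₁)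
        have ha2 : a = x' ++ ((E ++ u) ++ (E ++ y₁)) := by
          rw [ht1, hy1]; simp [List.append_assoc]
        have ha' : x' ++ (E ++ y₁) ∈ cc d l := by
          rcases ha with hinf | hsub
          · obtain ⟨s₁, s₂, hocc⟩ := hinf
            have hoc2 : s₁ ++ (d ++ s₂) = x' ++ ((E ++ u) ++ (E ++ y₁)) := by
              rw [← List.append_assoc, hocc, ha2]
            rcases List.append_eq_append_iff.1 hoc2 with ⟨g, hg1, hg2⟩ | ⟨g, hg1, hg2⟩
            · -- hg1 : x' = s₁ ++ g, hg2 : d ++ s₂ = g ++ ((E ++ u) ++ (E ++ y₁))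
              rcases List.append_eq_append_iff.1 hg2 with ⟨h, hh1, hh2⟩ | ⟨q, hq1, hq2⟩
              · -- hh1 : g = d ++ h : d occurs inside x'
                refine Or.inl ⟨s₁, h ++ (E ++ y₁), ?_⟩
                rw [hg1, hh1]; simp [List.append_assoc]
              · -- hq1 : d = g ++ q, hq2 : (E ++ u) ++ (E ++ y₁) = q ++ s₂
                have hqQ : q <+: (E ++ u) ++ (E ++ y₁) := ⟨s₂, hq2.symm⟩
                have hEQ : E <+: (E ++ u) ++ (E ++ y₁) := by
                  refine ⟨u ++ (E ++ y₁), ?_⟩; simp [List.append_assoc]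
                have hqlen : q.length ≤ E.length := by
                  have h1 : q.length ≤ d.length := by rw [hq1]; simp
                  omega
                obtain ⟨r, hr⟩ := List.prefix_of_prefix_length_le hqQ hEQ hqlen
                refine Or.inl ⟨s₁, r ++ y₁, ?_⟩
                rw [hg1, hq1, ← hr]; simp [List.append_assoc]
            · -- hg1 : s₁ = x' ++ g, hg2 : (E ++ u) ++ (E ++ y₁) = g ++ (d ++ s₂)
              rcases List.append_eq_append_iff.1 hg2.symm with ⟨h, hh1, hh2⟩ | ⟨h, hh1, hh2⟩
              swap
              · -- hh1 : g = (E ++ u) ++ h, hh2 : E ++ y₁ = h ++ (d ++ s₂)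
                refine Or.inl ⟨x' ++ h, s₂, ?_⟩
                rw [hh2]; simp [List.append_assoc]
              · -- hh1 : E ++ u = g ++ h, hh2 : d ++ s₂ = h ++ (E ++ y₁)
                have hhEu : h <:+ E ++ u := ⟨g, hh1.symm⟩
                have hhw : ∀ c ∈ h, c ∈ W := by
                  intro c hc
                  have : c ∈ E ++ u := hhEu.sublist.subset hc
                  rcases List.mem_append.1 this with hc' | hc'
                  · exact mem_wpow hc'
                  · exact List.mem_append.2 (Or.inl hc')
                rcases List.append_eq_append_iff.1 hh2 with ⟨q, hq1, hq2⟩ | ⟨q, hq1, hq2⟩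
                · -- hq1 : h = d ++ q : d inside E ++ u
                  have hdw : ∀ c ∈ d, c ∈ W := fun c hc =>
                    hhw c (by rw [hq1]; exact List.mem_append.2 (Or.inl hc))
                  refine Or.inr (((cc_sub_of_letters hdw hjm).trans
                    (List.sublist_append_left E y₁)).trans (List.sublist_append_right _ _))
                · -- hq1 : d = h ++ q, hq2 : E ++ y₁ = q ++ s₂
                  rcases le_or_gt q.length E.length with hql | hql
                  · have hqE : q <+: E :=
                      List.prefix_of_prefix_length_le ⟨s₂, hq2.symm⟩ (List.prefix_append _ _) hql
                    have hdw : ∀ c ∈ d, c ∈ W := by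
                      intro c hc
                      rw [hq1] at hc
                      rcases List.mem_append.1 hc with hc | hc
                      · exact hhw c hc
                      · exact mem_wpow (hqE.sublist.subset hc)
                    refine Or.inr (((cc_sub_of_letters hdw hjm).trans
                      (List.sublist_append_left E y₁)).trans (List.sublist_append_right _ _))
                  · exfalso
                    have h1 : q.length ≤ d.length := by rw [hq1]; simp
                    omega
          · -- sublist case
            rw [ha2] at hsub
            obtain ⟨p1, rest, hdec1, hp1, hrest⟩ := List.sublist_append_iff.1 hsub
            obtain ⟨p2, γ, hdec2, hp2, hγ⟩ := List.sublist_append_iff.1 hrest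
            obtain ⟨γ₁, γ₂, hdec3, hγ₁, hγ₂⟩ := List.sublist_append_iff.1 hγ
            have hmidw : ∀ c ∈ p2 ++ γ₁, c ∈ W := by
              intro c hc
              rcases List.mem_append.1 hc with hc | hc
              · have : c ∈ E ++ u := hp2.subset hc
                rcases List.mem_append.1 this with hc' | hc'
                · exact mem_wpow hc'
                · exact List.mem_append.2 (Or.inl hc')
              · exact mem_wpow (hγ₁.subset hc)
            have hmlen : (p2 ++ γ₁).length ≤ ω := by
              have h0 := hsub.length_le
              have h4 : (wpow d l).length = l * d.length := length_wpow d l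
              have h5 : (wpow d l).length = p1.length + (p2.length + (γ₁.length + γ₂.length)) := by
                rw [hdec1, hdec2, hdec3]; simp
              simp only [List.length_append]
              omega
            have hmid : (p2 ++ γ₁).Sublist E := hEdef ▸ sublist_wpow hmidw hmlen
            refine Or.inr ?_
            have : (wpow d l) = p1 ++ ((p2 ++ γ₁) ++ γ₂) := by
              rw [hdec1, hdec2, hdec3]; simp [List.append_assoc]
            rw [this]
            exact List.Sublist.append hp1 (List.Sublist.append hmid hγ₂)
        refine mem_lang_cons.2 ⟨x' ++ (E ++ y₁), ha', b, hb, ?_⟩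
        rw [hy2]; simp [List.append_assoc]
      · -- hp1 : (E ++ u) ++ E = t ++ t₂, hp2 : b = t₂ ++ y
        have htpre : t <+: (E ++ u) ++ E := ⟨t₂, hp1.symm⟩
        have ha' : x' ++ wpow W j ∈ cc d l := by
          rcases ha with hinf | hsub
          · obtain ⟨s₁, s₂, hocc⟩ := hinf
            have hoc2 : s₁ ++ (d ++ s₂) = x' ++ t := by
              rw [← List.append_assoc, hocc, ht1]
            rcases List.append_eq_append_iff.1 hoc2 with ⟨g, hg1, hg2⟩ | ⟨g, hg1, hg2⟩
            · -- hg1 : x' = s₁ ++ g, hg2 : d ++ s₂ = g ++ t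
              rcases List.append_eq_append_iff.1 hg2 with ⟨h, hh1, hh2⟩ | ⟨q, hq1, hq2⟩
              · -- hh1 : g = d ++ h : d inside x'
                refine Or.inl ⟨s₁, h ++ wpow W j, ?_⟩
                rw [hg1, hh1]; simp [List.append_assoc]
              · -- hq1 : d = g ++ q, hq2 : t = q ++ s₂
                have hqt : q <+: t := ⟨s₂, hq2.symm⟩
                have hqP : q <+: (E ++ u) ++ E := hqt.trans htpre
                have hEP : E <+: (E ++ u) ++ E := by
                  refine ⟨u ++ E, ?_⟩; simp [List.append_assoc]
                have hqlen : q.length ≤ E.length := by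
                  have h1 : q.length ≤ d.length := by rw [hq1]; simp
                  omega
                have hqE : q <+: E := List.prefix_of_prefix_length_le hqP hEP hqlen
                have hjE : wpow W j <+: E := ⟨wpow W M, hEsplit.symm⟩
                have hqj : q <+: wpow W j := by
                  refine List.prefix_of_prefix_length_le hqE hjE ?_
                  rw [length_wpow]
                  have h1 : q.length ≤ d.length := by rw [hq1]; simp
                  have h2 : j ≤ j * W.length := Nat.le_mul_of_pos_right _ hw
                  omega
                obtain ⟨r, hr⟩ := hqj
                refine Or.inl ⟨s₁, r, ?_⟩
                rw [hg1, hq1, ← hr]; simp [List.append_assoc]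
            · -- hg1 : s₁ = x' ++ g, hg2 : t = g ++ (d ++ s₂) : d inside t ⊆ P
              have hdw : ∀ c ∈ d, c ∈ W := by
                intro c hc
                refine hPw c (htpre.sublist.subset ?_)
                rw [hg2]
                exact List.mem_append.2 (Or.inr (List.mem_append.2 (Or.inl hc)))
              exact Or.inr ((cc_sub_of_letters hdw (le_refl j)).trans
                (List.sublist_append_right _ _))
          · -- sublist case : wpow d l <+ x' ++ t
            rw [ht1] at hsub
            obtain ⟨p1, β, hdec1, hp1, hβ⟩ := List.sublist_append_iff.1 hsub
            have hβw : ∀ c ∈ β, c ∈ W := fun c hc => hPw c (htpre.sublist.subset (hβ.subset hc))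
            have hβlen : β.length ≤ j := by
              have h0 := hsub.length_le
              have h4 : (wpow d l).length = l * d.length := length_wpow d l
              have h5 : (wpow d l).length = p1.length + β.length := by rw [hdec1]; simp
              omega
            refine Or.inr ?_
            rw [hdec1]
            exact List.Sublist.append hp1 (sublist_wpow hβw hβlen)
        -- now the tail part
        have ht₂suf : t₂ <:+ (E ++ u) ++ E := ⟨t, hp1.symm⟩
        have hEMsuf : wpow W M <:+ (E ++ u) ++ E := by
          rw [hEsplit]
          exact ⟨((wpow W j ++ wpow W M) ++ u) ++ wpow W j, by simp [List.append_assoc]⟩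
        have hMtl : ((tl.map fun d => l * d.length).sum) ≤ M := by omega
        rcases le_or_gt (M * W.length) t₂.length with hlen2 | hlen2
        · have h1 : wpow W M <:+ t₂ :=
            List.suffix_of_suffix_length_le hEMsuf ht₂suf (by rw [length_wpow]; exact hlen2)
          obtain ⟨s'', hs''⟩ := h1
          have hs''w : ∀ c ∈ s'', c ∈ W := by
            intro c hc
            exact hPw c (ht₂suf.sublist.subset (by rw [← hs'']; exact List.mem_append.2 (Or.inl hc)))
          have hb' : wpow W M ++ y ∈ lang l tl := by
            refine D1 hl hw tl M hMtl s'' y hs''w ?_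
            rw [← List.append_assoc, hs'', ← hp2]
            exact hb
          refine mem_lang_cons.2 ⟨x' ++ wpow W j, ha', wpow W M ++ y, hb', ?_⟩
          rw [hEsplit]; simp [List.append_assoc]
        · have h1 : t₂ <:+ wpow W M :=
            List.suffix_of_suffix_length_le ht₂suf hEMsuf (by rw [length_wpow]; omega)
          obtain ⟨s₃, hs₃⟩ := h1
          cases tl with
          | nil =>
            have hbnil := mem_lang_nil.1 hb
            rw [hp2] at hbnil
            simp only [List.append_eq_nil_iff] at hbnil
            refine mem_lang_cons.2 ⟨x' ++ (E ++ y), ?_, [], mem_lang_nil.2 rfl, by simp⟩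
            rw [hbnil.2, hEsplit]
            have : x' ++ (wpow W j ++ wpow W M ++ []) = (x' ++ wpow W j) ++ wpow W M := by
              simp [List.append_assoc]
            rw [this]
            exact cc_append_right ha' _
          | cons d₂ tl₂ =>
            have hb' : wpow W M ++ y ∈ lang l (d₂ :: tl₂) := by
              have hbe : wpow W M ++ y = s₃ ++ b := by rw [hp2, ← hs₃, List.append_assoc]
              rw [hbe]
              exact lang_left_ext hb s₃
            refine mem_lang_cons.2 ⟨x' ++ wpow W j, ha', wpow W M ++ y, hb', ?_⟩
            rw [hEsplit]; simp [List.append_assoc]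

end Aux

namespace Aux

variable {α : Type*}

theorem mainI {u v : List α} {l ω : ℕ} (hE : wpow (u ++ v) ω ≠ []) :
    ∀ (ds : List (List α)), (∀ d ∈ ds, d.length ≤ (wpow (u ++ v) ω).length) →
    ∀ x' y : List α,
      x' ++ (wpow (u ++ v) ω ++ y) ∈ lang l ds →
      x' ++ (((wpow (u ++ v) ω ++ u) ++ wpow (u ++ v) ω) ++ y) ∈ lang l ds := by
  set W := u ++ v with hWdef
  set E := wpow W ω with hEdef
  intro ds
  induction ds with
  | nil =>
    intro _ x' y h
    rw [mem_lang_nil] at h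
    simp only [List.append_eq_nil_iff] at h
    exact absurd h.2.1 hE
  | cons d tl ih =>
    intro hlens x' y hmem
    have hdE : d.length ≤ E.length := hlens d (List.mem_cons_self)
    obtain ⟨a, ha, b, hb, heq⟩ := mem_lang_cons.1 hmem
    have heq' : a ++ b = x' ++ (E ++ y) := heq.symm
    rcases List.append_eq_append_iff.1 heq' with ⟨x₂, hx1, hx2⟩ | ⟨t, ht1, ht2⟩
    · -- hx1 : x' = a ++ x₂, hx2 : b = x₂ ++ (E ++ y)
      have hb' : x₂ ++ (((E ++ u) ++ E) ++ y) ∈ lang l tl :=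
        ih (fun d' hd' => hlens d' (List.mem_cons_of_mem _ hd')) x₂ y (by rw [← hx2]; exact hb)
      exact mem_lang_cons.2 ⟨a, ha, _, hb', by rw [hx1]; simp [List.append_assoc]⟩
    · -- ht1 : a = x' ++ t, ht2 : E ++ y = t ++ b
      rcases List.append_eq_append_iff.1 ht2 with ⟨g, hg1, hg2⟩ | ⟨e₂, he1, he2⟩
      · -- hg1 : t = E ++ g, hg2 : y = g ++ b
        have ha2 : a = x' ++ (E ++ g) := by rw [ht1, hg1]
        have ha' : x' ++ (((E ++ u) ++ E) ++ g) ∈ cc d l := by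
          rcases ha with hinf | hsub
          · obtain ⟨s₁, s₂, hocc⟩ := hinf
            have hoc2 : s₁ ++ (d ++ s₂) = x' ++ (E ++ g) := by
              rw [← List.append_assoc, hocc, ha2]
            rcases List.append_eq_append_iff.1 hoc2 with ⟨h, hh1, hh2⟩ | ⟨h, hh1, hh2⟩
            · -- hh1 : x' = s₁ ++ h, hh2 : d ++ s₂ = h ++ (E ++ g)
              rcases List.append_eq_append_iff.1 hh2 with ⟨q, hq1, hq2⟩ | ⟨q, hq1, hq2⟩
              · -- hq1 : h = d ++ q : d inside x'
                refine Or.inl ⟨s₁, q ++ (((E ++ u) ++ E) ++ g), ?_⟩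
                rw [hh1, hq1]; simp [List.append_assoc]
              · -- hq1 : d = h ++ q, hq2 : E ++ g = q ++ s₂
                rcases le_or_gt q.length E.length with hql | hql
                · have hqE : q <+: E :=
                    List.prefix_of_prefix_length_le ⟨s₂, hq2.symm⟩ (List.prefix_append _ _) hql
                  obtain ⟨r, hr⟩ := hqE
                  refine Or.inl ⟨s₁, r ++ (u ++ (E ++ g)), ?_⟩
                  rw [hh1, hq1, ← hr]
                  simp [List.append_assoc]
                · exfalso
                  have h1 : q.length ≤ d.length := by rw [hq1]; simp
                  omega
            · -- hh1 : s₁ = x' ++ h, hh2 : E ++ g = h ++ (d ++ s₂)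
              rcases List.append_eq_append_iff.1 hh2 with ⟨q, hq1, hq2⟩ | ⟨q, hq1, hq2⟩
              · -- hq1 : h = E ++ q, hq2 : g = q ++ (d ++ s₂) : d inside g
                refine Or.inl ⟨x' ++ (((E ++ u) ++ E) ++ q), s₂, ?_⟩
                rw [hq2]; simp [List.append_assoc]
              · -- hq1 : E = h ++ q, hq2 : d ++ s₂ = q ++ g
                refine Or.inl ⟨x' ++ ((E ++ u) ++ h), s₂, ?_⟩
                rw [hq1]
                simp only [List.append_assoc]
                rw [hq2]
          · -- sublist
            rw [ha2] at hsub
            have hmono : (x' ++ (E ++ g)).Sublist (x' ++ (((E ++ u) ++ E) ++ g)) := by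
              refine List.Sublist.append (List.Sublist.refl x') ?_
              exact List.Sublist.append
                ((List.sublist_append_left E u).trans (List.sublist_append_left (E ++ u) E))
                (List.Sublist.refl g)
            exact Or.inr (hsub.trans hmono)
        refine mem_lang_cons.2 ⟨x' ++ (((E ++ u) ++ E) ++ g), ha', b, hb, ?_⟩
        rw [hg2]; simp [List.append_assoc]
      · -- he1 : E = t ++ e₂, he2 : b = e₂ ++ y
        refine mem_lang_cons.2 ⟨a ++ (e₂ ++ (u ++ t)), cc_append_right ha _,
          e₂ ++ y, by rw [← he2]; exact hb, ?_⟩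
        rw [ht1]
        conv_lhs => rw [he1]
        simp [List.append_assoc]

end Aux


theorem stmt_13 {α : Type*} (l k : ℕ) (hl : 1 ≤ l) (hk : 1 ≤ k)
    (us : List (List α)) (hlen : us.length = k) (hne : ∀ u ∈ us, u ≠ [])
    (ω : ℕ) (hω : (us.map fun u => l * u.length).sum ≤ ω)
    (u v x y : List α) (huv : u ++ v ≠ []) :
    (x ++ wpow (u ++ v) ω ++ y ∈ chainConc (us.map fun w => cc w l) ↔
      x ++ wpow (u ++ v) ω ++ u ++ wpow (u ++ v) ω ++ y ∈
        chainConc (us.map fun w => cc w l)) := by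
  have hW : 0 < (u ++ v).length := List.length_pos_iff.2 huv
  have hω1 : 1 ≤ ω := by
    cases us with
    | nil => rw [List.length_nil] at hlen; omega
    | cons d₀ us' =>
      have hd₀ : 0 < d₀.length := List.length_pos_iff.2 (hne d₀ (List.mem_cons_self))
      simp only [List.map_cons, List.sum_cons] at hω
      have : 0 < l * d₀.length := Nat.mul_pos hl hd₀
      omega
  have hElen : 0 < (wpow (u ++ v) ω).length := by
    rw [Aux.length_wpow]; exact Nat.mul_pos hω1 hW
  have hE : wpow (u ++ v) ω ≠ [] := by
    intro h; rw [h] at hElen; simp at hElen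
  have hdlen : ∀ d ∈ us, d.length ≤ (wpow (u ++ v) ω).length := by
    intro d hd
    have h1 : l * d.length ≤ (us.map fun u => l * u.length).sum :=
      List.single_le_sum (fun _ _ => Nat.zero_le _) _ (List.mem_map_of_mem hd)
    have h2 : d.length ≤ l * d.length := Nat.le_mul_of_pos_left _ hl
    have h3 : ω ≤ ω * (u ++ v).length := Nat.le_mul_of_pos_right _ hW
    rw [Aux.length_wpow]; omega
  constructor
  · intro hmem
    have h0 : x ++ (wpow (u ++ v) ω ++ y) ∈ Aux.lang l us := by
      rw [← List.append_assoc]; exact hmem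
    have hres := Aux.mainI hE us hdlen x y h0
    show x ++ wpow (u ++ v) ω ++ u ++ wpow (u ++ v) ω ++ y ∈ Aux.lang l us
    simpa [List.append_assoc] using hres
  · intro hmem
    have h0 : x ++ (((wpow (u ++ v) ω ++ u) ++ wpow (u ++ v) ω) ++ y) ∈ Aux.lang l us := by
      have : x ++ wpow (u ++ v) ω ++ u ++ wpow (u ++ v) ω ++ y ∈ Aux.lang l us := hmem
      simpa [List.append_assoc] using this
    have hres := Aux.mainD hl hW us hω x y h0
    show x ++ wpow (u ++ v) ω ++ y ∈ Aux.lang l us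
    simpa [List.append_assoc] using hres
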